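/- For the quadratic quasi-Newton scheme (x_{k+1} = x_k - G_k⁻¹∇f(x_k), G₀ = LB, G_{k+1} = Broyd_{φ_k}(A,G_k,u_k), φ_k ∈ [0,1], with μB ⪯ A ⪯ LB), for all k ≥ 1: λ_f(x_k) ≤ [∏_{i=0}^{k-1}(φ_i μ/L + 1 - φ_i)]^{-1/2} · (nL/(μk))^{k/2} · λ_f(x₀). In particular, for BFGS (all φ_i = 0), λ_f(x_k) ≤ (nL/(μk))^{k/2} λ_f(x₀). -/

import Mathlib

open Matrix

noncomputable def DFPupd {n : ℕ} (A G : Matrix (Fin n) (Fin n) ℝ) (u : Fin n → ℝ) :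
    Matrix (Fin n) (Fin n) ℝ :=
  G - ((u ⬝ᵥ A.mulVec u)⁻¹) •
      (vecMulVec (A.mulVec u) (G.mulVec u) + vecMulVec (G.mulVec u) (A.mulVec u))
    + (((u ⬝ᵥ G.mulVec u) / (u ⬝ᵥ A.mulVec u) + 1) * (u ⬝ᵥ A.mulVec u)⁻¹) •
      vecMulVec (A.mulVec u) (A.mulVec u)

noncomputable def BFGSupd {n : ℕ} (A G : Matrix (Fin n) (Fin n) ℝ) (u : Fin n → ℝ) :
    Matrix (Fin n) (Fin n) ℝ :=
  G - ((u ⬝ᵥ G.mulVec u)⁻¹) • vecMulVec (G.mulVec u) (G.mulVec u)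
    + ((u ⬝ᵥ A.mulVec u)⁻¹) • vecMulVec (A.mulVec u) (A.mulVec u)

noncomputable def Broyd {n : ℕ} (φ : ℝ) (A G : Matrix (Fin n) (Fin n) ℝ) (u : Fin n → ℝ) :
    Matrix (Fin n) (Fin n) ℝ :=
  if u = 0 then G else φ • DFPupd A G u + (1 - φ) • BFGSupd A G u

/-- Closeness measure θ(A, G, u). -/
noncomputable def theta {n : ℕ} (A G : Matrix (Fin n) (Fin n) ℝ) (u : Fin n → ℝ) : ℝ :=
  if u = 0 then 0 else
    Real.sqrt ((u ⬝ᵥ ((G - A) * A⁻¹ * (G - A)).mulVec u) /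
      (u ⬝ᵥ (G * A⁻¹ * G).mulVec u))

/-- Trace potential σ(A, G). -/
noncomputable def sigmaPot {n : ℕ} (A G : Matrix (Fin n) (Fin n) ℝ) : ℝ :=
  (A⁻¹ * (G - A)).trace

/-- Byrd–Nocedal potential ψ(A, G). -/
noncomputable def psiPot {n : ℕ} (A G : Matrix (Fin n) (Fin n) ℝ) : ℝ :=
  (A⁻¹ * (G - A)).trace - Real.log (A⁻¹ * G).det

noncomputable def omegaFn (t : ℝ) : ℝ := t - Real.log (1 + t)

/-- Gradient norm λ_f(x) = ‖∇f(x)‖_{A⁻¹} for the quadratic f(x) = ½xᵀAx - bᵀx. -/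
noncomputable def lamQ {n : ℕ} (A : Matrix (Fin n) (Fin n) ℝ) (b x : Fin n → ℝ) : ℝ :=
  Real.sqrt ((A.mulVec x - b) ⬝ᵥ A⁻¹.mulVec (A.mulVec x - b))

variable {n : ℕ}


lemma psd_quad {M : Matrix (Fin n) (Fin n) ℝ} (hM : M.PosSemidef) (v : Fin n → ℝ) :
    0 ≤ v ⬝ᵥ M *ᵥ v := by simpa using hM.dotProduct_mulVec_nonneg v

lemma vecMulVec_mulVec' (a b v : Fin n → ℝ) : (vecMulVec a b) *ᵥ v = (b ⬝ᵥ v) • a := by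
  ext i
  simp only [vecMulVec_apply, mulVec, dotProduct, Pi.smul_apply, smul_eq_mul, Finset.sum_mul]
  exact Finset.sum_congr rfl fun j _ => by ring

lemma dot_vecMulVec (a b v w : Fin n → ℝ) :
    v ⬝ᵥ (vecMulVec a b) *ᵥ w = (v ⬝ᵥ a) * (b ⬝ᵥ w) := by
  rw [vecMulVec_mulVec', dotProduct_smul, smul_eq_mul]; ring

lemma trace_mul_vecMulVec (M : Matrix (Fin n) (Fin n) ℝ) (a b : Fin n → ℝ) :
    (M * vecMulVec a b).trace = b ⬝ᵥ (M *ᵥ a) := by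
  simp only [trace, diag, mul_apply, vecMulVec_apply, dotProduct, mulVec]
  refine Finset.sum_congr rfl fun j _ => ?_
  rw [Finset.mul_sum]
  exact Finset.sum_congr rfl fun i _ => by ring

lemma transpose_eq_of_herm {M : Matrix (Fin n) (Fin n) ℝ} (hM : M.IsHermitian) : Mᵀ = M := by
  ext i j
  have := congrFun (congrFun hM.eq i) j
  simpa using this

lemma dot_mulVec_symm {M : Matrix (Fin n) (Fin n) ℝ} (hM : M.IsHermitian) (v w : Fin n → ℝ) :
    v ⬝ᵥ M *ᵥ w = w ⬝ᵥ M *ᵥ v := by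
  rw [dotProduct_mulVec, ← mulVec_transpose, transpose_eq_of_herm hM, dotProduct_comm]

lemma psd_cauchy_schwarz {M : Matrix (Fin n) (Fin n) ℝ} (hM : M.PosSemidef) (v w : Fin n → ℝ) :
    (v ⬝ᵥ M *ᵥ w) ^ 2 ≤ (v ⬝ᵥ M *ᵥ v) * (w ⬝ᵥ M *ᵥ w) := by
  have key : ∀ t : ℝ, 0 ≤ (w ⬝ᵥ M *ᵥ w) * (t * t) + (2 * (v ⬝ᵥ M *ᵥ w)) * t + (v ⬝ᵥ M *ᵥ v) := by
    intro t
    have h := psd_quad hM (v + t • w)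
    have hsymm := dot_mulVec_symm hM.isHermitian w v
    simp only [mulVec_add, mulVec_smul, dotProduct_add, add_dotProduct, smul_dotProduct,
      dotProduct_smul, smul_eq_mul] at h
    rw [hsymm] at h
    nlinarith [h]
  have := discrim_le_zero key
  simp only [discrim] at this
  nlinarith [this]

lemma trace_nonneg_psd {M : Matrix (Fin n) (Fin n) ℝ} (hM : M.PosSemidef) : 0 ≤ M.trace := by
  refine Finset.sum_nonneg fun i _ => ?_
  have := hM.dotProduct_mulVec_nonneg (Pi.single i 1)
  simpa [dotProduct, mulVec, Pi.single_apply] using this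

lemma trace_inv_mul_nonneg {A M : Matrix (Fin n) (Fin n) ℝ} (hA : A.PosDef)
    (hM : M.PosSemidef) : 0 ≤ (A⁻¹ * M).trace := by
  have hAinv : (A⁻¹).PosSemidef := hA.inv.posSemidef
  set S := (open MatrixOrder in CFC.sqrt A⁻¹) with hS
  have hSS : S * S = A⁻¹ := by
    open MatrixOrder in exact CFC.sqrt_mul_sqrt_self A⁻¹ hAinv.nonneg
  have hSherm : S.IsHermitian := by
    open MatrixOrder in exact (CFC.sqrt_nonneg A⁻¹).posSemidef.isHermitian
  have h1 : (A⁻¹ * M).trace = (S * M * S).trace := by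
    rw [← hSS, Matrix.mul_assoc, Matrix.trace_mul_comm S (S * M), Matrix.mul_assoc]
  rw [h1]
  have : (S * M * S).PosSemidef := by
    have := hM.mul_mul_conjTranspose_same S
    rwa [hSherm.eq] at this
  exact trace_nonneg_psd this

lemma dot_mul_mulVec (P Q : Matrix (Fin n) (Fin n) ℝ) (u v : Fin n → ℝ) :
    u ⬝ᵥ (P * Q) *ᵥ v = (Pᵀ *ᵥ u) ⬝ᵥ (Q *ᵥ v) := by
  rw [← mulVec_mulVec, dotProduct_mulVec, ← mulVec_transpose]

lemma quad_sub_smul {M : Matrix (Fin n) (Fin n) ℝ} (hM : M.IsHermitian) (v u : Fin n → ℝ)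
    (c : ℝ) : (v - c • u) ⬝ᵥ M *ᵥ (v - c • u)
      = v ⬝ᵥ M *ᵥ v - 2 * c * (v ⬝ᵥ M *ᵥ u) + c ^ 2 * (u ⬝ᵥ M *ᵥ u) := by
  have hsymm := dot_mulVec_symm hM u v
  simp only [mulVec_sub, mulVec_smul, dotProduct_sub, sub_dotProduct, smul_dotProduct,
    dotProduct_smul, smul_eq_mul]
  rw [hsymm]; ring

lemma psd_smul_sub_quad {A M : Matrix (Fin n) (Fin n) ℝ} {c : ℝ}
    (h : (c • A - M).PosSemidef) (v : Fin n → ℝ) :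
    v ⬝ᵥ M *ᵥ v ≤ c * (v ⬝ᵥ A *ᵥ v) := by
  have := psd_quad h v
  simp only [sub_mulVec, dotProduct_sub, smul_mulVec, dotProduct_smul, smul_eq_mul] at this
  linarith

/-- Key: 0 ⪯ M, M ⪯ cA (c ≥ 0), A ≻ 0 ⇒ M A⁻¹ M ⪯ c M (in quadratic-form sense). -/
lemma quad_MAinvM_le {A M : Matrix (Fin n) (Fin n) ℝ} {c : ℝ} (hA : A.PosDef)
    (hM : M.PosSemidef) (hc : 0 ≤ c) (hMA : (c • A - M).PosSemidef) (v : Fin n → ℝ) :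
    v ⬝ᵥ (M * A⁻¹ * M) *ᵥ v ≤ c * (v ⬝ᵥ M *ᵥ v) := by
  have hAunit : IsUnit A.det := isUnit_iff_ne_zero.mpr hA.det_pos.ne'
  set w := A⁻¹ *ᵥ (M *ᵥ v) with hw
  have hAw : A *ᵥ w = M *ᵥ v := by
    rw [hw, mulVec_mulVec, Matrix.mul_nonsing_inv A hAunit, one_mulVec]
  have hLHS : v ⬝ᵥ (M * A⁻¹ * M) *ᵥ v = w ⬝ᵥ A *ᵥ w := by
    rw [Matrix.mul_assoc, dot_mul_mulVec, transpose_eq_of_herm hM.isHermitian,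
      ← mulVec_mulVec, ← hw, ← hAw, dotProduct_comm]
  have hL0 : 0 ≤ w ⬝ᵥ A *ᵥ w := psd_quad hA.posSemidef w
  have hvMw : v ⬝ᵥ M *ᵥ w = w ⬝ᵥ A *ᵥ w := by
    rw [dot_mulVec_symm hM.isHermitian, hAw]
  have hCS := psd_cauchy_schwarz hM v w
  have hwMw : w ⬝ᵥ M *ᵥ w ≤ c * (w ⬝ᵥ A *ᵥ w) := psd_smul_sub_quad hMA w
  have hvMv : 0 ≤ v ⬝ᵥ M *ᵥ v := psd_quad hM v
  rw [hLHS]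
  rcases eq_or_lt_of_le hL0 with h0 | hpos
  · rw [← h0]; positivity
  · rw [hvMw] at hCS
    nlinarith [hCS, hwMw, hvMv, hpos]


lemma herm_smul {M : Matrix (Fin n) (Fin n) ℝ} (c : ℝ) (h : M.IsHermitian) :
    (c • M).IsHermitian := by
  unfold Matrix.IsHermitian
  rw [conjTranspose_smul, star_trivial, h.eq]

lemma vecMulVec_conjT (a b : Fin n → ℝ) : (vecMulVec a b)ᴴ = vecMulVec b a := by
  ext i j; simp [vecMulVec_apply, conjTranspose_apply, mul_comm]

section upd
variable {A G : Matrix (Fin n) (Fin n) ℝ} {u : Fin n → ℝ} {η : ℝ}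

lemma DFP_herm (hA : A.IsHermitian) (hG : G.IsHermitian) : (DFPupd A G u).IsHermitian := by
  unfold Matrix.IsHermitian DFPupd
  simp only [conjTranspose_sub, conjTranspose_add, conjTranspose_smul, vecMulVec_conjT,
    hA.eq, hG.eq, star_trivial]
  rw [add_comm (vecMulVec (G *ᵥ u) (A *ᵥ u))]

lemma BFGS_herm (hA : A.IsHermitian) (hG : G.IsHermitian) : (BFGSupd A G u).IsHermitian := by
  unfold Matrix.IsHermitian BFGSupd
  simp only [conjTranspose_sub, conjTranspose_add, conjTranspose_smul, vecMulVec_conjT,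
    hA.eq, hG.eq, star_trivial]

lemma DFP_quad (v : Fin n → ℝ) :
    v ⬝ᵥ (DFPupd A G u) *ᵥ v = v ⬝ᵥ G *ᵥ v
      - (u ⬝ᵥ A *ᵥ u)⁻¹ * (2 * (v ⬝ᵥ A *ᵥ u) * (v ⬝ᵥ G *ᵥ u))
      + ((u ⬝ᵥ G *ᵥ u) / (u ⬝ᵥ A *ᵥ u) + 1) * (u ⬝ᵥ A *ᵥ u)⁻¹ * (v ⬝ᵥ A *ᵥ u) ^ 2 := by
  simp only [DFPupd, sub_mulVec, add_mulVec, smul_mulVec, dotProduct_sub, dotProduct_add,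
    dotProduct_smul, smul_eq_mul, dot_vecMulVec]
  rw [dotProduct_comm (G *ᵥ u) v, dotProduct_comm (A *ᵥ u) v]
  ring

lemma BFGS_quad (v : Fin n → ℝ) :
    v ⬝ᵥ (BFGSupd A G u) *ᵥ v = v ⬝ᵥ G *ᵥ v
      - (u ⬝ᵥ G *ᵥ u)⁻¹ * (v ⬝ᵥ G *ᵥ u) ^ 2 + (u ⬝ᵥ A *ᵥ u)⁻¹ * (v ⬝ᵥ A *ᵥ u) ^ 2 := by
  simp only [BFGSupd, sub_mulVec, add_mulVec, smul_mulVec, dotProduct_sub, dotProduct_add,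
    dotProduct_smul, smul_eq_mul, dot_vecMulVec]
  rw [dotProduct_comm (G *ᵥ u) v, dotProduct_comm (A *ᵥ u) v]
  ring

variable (hA : A.PosDef) (hGA : (G - A).PosSemidef) (hAG : (η • A - G).PosSemidef)
  (hη : 1 ≤ η) (hu : u ≠ 0)

include hA hGA

lemma G_herm' : G.IsHermitian := by
  have h := sub_add_cancel G A
  rw [← h]; exact hGA.isHermitian.add hA.isHermitian

lemma G_posDef : G.PosDef := by
  refine Matrix.PosDef.of_dotProduct_mulVec_pos (G_herm' hA hGA) fun v hv => ?_
  have h1 : 0 < v ⬝ᵥ A *ᵥ v := by simpa using hA.dotProduct_mulVec_pos hv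
  have h2 := psd_quad hGA v
  simp only [sub_mulVec, dotProduct_sub] at h2
  simpa using by linarith

include hAG hη hu in
lemma DFP_sandwich :
    (DFPupd A G u - A).PosSemidef ∧ (η • A - DFPupd A G u).PosSemidef := by
  have hGh := G_herm' hA hGA
  have hr : 0 < u ⬝ᵥ A *ᵥ u := by simpa using hA.dotProduct_mulVec_pos hu
  set r := u ⬝ᵥ A *ᵥ u with hrdef
  set q := u ⬝ᵥ G *ᵥ u with hqdef
  constructor
  · refine Matrix.PosSemidef.of_dotProduct_mulVec_nonneg ((DFP_herm hA.isHermitian hGh).sub hA.isHermitian) fun v => ?_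
    set α := v ⬝ᵥ A *ᵥ u with hα
    have hw := psd_quad hGA (v - (α / r) • u)
    rw [quad_sub_smul hGA.isHermitian] at hw
    simp only [sub_mulVec, dotProduct_sub] at hw
    have hexp : v ⬝ᵥ (DFPupd A G u) *ᵥ v - v ⬝ᵥ A *ᵥ v
        = (v ⬝ᵥ G *ᵥ v - v ⬝ᵥ A *ᵥ v) - 2 * (α / r) * (v ⬝ᵥ G *ᵥ u - α)
          + (α / r) ^ 2 * (q - r) := by
      rw [DFP_quad, ← hrdef, ← hqdef]; field_simp; ring
    simp only [star_trivial, sub_mulVec, dotProduct_sub]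
    linarith [hexp, hw]
  · refine Matrix.PosSemidef.of_dotProduct_mulVec_nonneg ((herm_smul η hA.isHermitian).sub (DFP_herm hA.isHermitian hGh)) fun v => ?_
    set α := v ⬝ᵥ A *ᵥ u with hα
    have hw := psd_quad hAG (v - (α / r) • u)
    rw [quad_sub_smul hAG.isHermitian] at hw
    simp only [sub_mulVec, dotProduct_sub, smul_mulVec, dotProduct_smul, smul_eq_mul] at hw
    have hpos : 0 ≤ (η - 1) * α ^ 2 / r :=
      div_nonneg (mul_nonneg (by linarith) (sq_nonneg _)) hr.le
    have hexp : η * (v ⬝ᵥ A *ᵥ v) - v ⬝ᵥ (DFPupd A G u) *ᵥ v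
        = ((η * (v ⬝ᵥ A *ᵥ v) - v ⬝ᵥ G *ᵥ v) - 2 * (α / r) * (η * α - v ⬝ᵥ G *ᵥ u)
          + (α / r) ^ 2 * (η * r - q)) + (η - 1) * α ^ 2 / r := by
      rw [DFP_quad, ← hrdef, ← hqdef]; field_simp; ring
    simp only [star_trivial, sub_mulVec, dotProduct_sub, smul_mulVec, dotProduct_smul,
      smul_eq_mul]
    linarith [hexp, hw, hpos]

include hAG hη hu in
lemma BFGS_sandwich :
    (BFGSupd A G u - A).PosSemidef ∧ (η • A - BFGSupd A G u).PosSemidef := by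
  have hGh := G_herm' hA hGA
  have hr : 0 < u ⬝ᵥ A *ᵥ u := by simpa using hA.dotProduct_mulVec_pos hu
  have hq : 0 < u ⬝ᵥ G *ᵥ u := by simpa using (G_posDef hA hGA).dotProduct_mulVec_pos hu
  set r := u ⬝ᵥ A *ᵥ u with hrdef
  set q := u ⬝ᵥ G *ᵥ u with hqdef
  constructor
  · refine Matrix.PosSemidef.of_dotProduct_mulVec_nonneg ((BFGS_herm hA.isHermitian hGh).sub hA.isHermitian) fun v => ?_
    set α := v ⬝ᵥ A *ᵥ u with hα
    set β := v ⬝ᵥ G *ᵥ u with hβ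
    have hw := psd_quad hGA (v - (β / q) • u)
    rw [quad_sub_smul hGA.isHermitian] at hw
    simp only [sub_mulVec, dotProduct_sub] at hw
    have hpos : 0 ≤ r * (α / r - β / q) ^ 2 := by positivity
    have hexp : v ⬝ᵥ (BFGSupd A G u) *ᵥ v - v ⬝ᵥ A *ᵥ v
        = ((v ⬝ᵥ G *ᵥ v - v ⬝ᵥ A *ᵥ v) - 2 * (β / q) * (β - α)
          + (β / q) ^ 2 * (q - r)) + r * (α / r - β / q) ^ 2 := by
      rw [BFGS_quad, ← hrdef, ← hqdef]; field_simp; ring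
    simp only [star_trivial, sub_mulVec, dotProduct_sub]
    linarith [hexp, hw, hpos]
  · refine Matrix.PosSemidef.of_dotProduct_mulVec_nonneg ((herm_smul η hA.isHermitian).sub (BFGS_herm hA.isHermitian hGh))
      fun v => ?_
    set α := v ⬝ᵥ A *ᵥ u with hα
    set β := v ⬝ᵥ G *ᵥ u with hβ
    have hw := psd_quad hAG (v - (α / r) • u)
    rw [quad_sub_smul hAG.isHermitian] at hw
    simp only [sub_mulVec, dotProduct_sub, smul_mulVec, dotProduct_smul, smul_eq_mul] at hw
    have hpos : 0 ≤ (η - 1) * α ^ 2 / r :=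
      div_nonneg (mul_nonneg (by linarith) (sq_nonneg _)) hr.le
    have hpos2 : 0 ≤ q * (α / r - β / q) ^ 2 := by positivity
    have hexp : η * (v ⬝ᵥ A *ᵥ v) - v ⬝ᵥ (BFGSupd A G u) *ᵥ v
        = ((η * (v ⬝ᵥ A *ᵥ v) - v ⬝ᵥ G *ᵥ v) - 2 * (α / r) * (η * α - β)
          + (α / r) ^ 2 * (η * r - q)) + (η - 1) * α ^ 2 / r + q * (α / r - β / q) ^ 2 := by
      rw [BFGS_quad, ← hrdef, ← hqdef]; field_simp; ring
    simp only [star_trivial, sub_mulVec, dotProduct_sub, smul_mulVec, dotProduct_smul,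
      smul_eq_mul]
    linarith [hexp, hw, hpos, hpos2]

end upd

lemma quad_MAinvM_nonneg {A M : Matrix (Fin n) (Fin n) ℝ} (hA : A.PosDef)
    (hM : M.IsHermitian) (v : Fin n → ℝ) : 0 ≤ v ⬝ᵥ (M * A⁻¹ * M) *ᵥ v := by
  rw [Matrix.mul_assoc, dot_mul_mulVec, transpose_eq_of_herm hM, ← mulVec_mulVec]
  exact psd_quad hA.inv.posSemidef (M *ᵥ v)

lemma psd_smul' {M : Matrix (Fin n) (Fin n) ℝ} {c : ℝ} (hM : M.PosSemidef) (hc : 0 ≤ c) :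
    (c • M).PosSemidef := by
  refine Matrix.PosSemidef.of_dotProduct_mulVec_nonneg (herm_smul c hM.isHermitian) fun v => ?_
  have := psd_quad hM v
  simp only [smul_mulVec, dotProduct_smul, smul_eq_mul, star_trivial]
  positivity

section sig
variable {A G : Matrix (Fin n) (Fin n) ℝ} {u : Fin n → ℝ} {η : ℝ}
variable (hA : A.PosDef) (hGA : (G - A).PosSemidef) (hAG : (η • A - G).PosSemidef)
  (hη : 1 ≤ η) (hu : u ≠ 0)

include hA

lemma Ainv_mulVec_A_mulVec (w : Fin n → ℝ) : A⁻¹ *ᵥ (A *ᵥ w) = w := by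
  rw [mulVec_mulVec, Matrix.nonsing_inv_mul A (isUnit_iff_ne_zero.mpr hA.det_pos.ne'),
    one_mulVec]

lemma A_mulVec_Ainv_mulVec (w : Fin n → ℝ) : A *ᵥ (A⁻¹ *ᵥ w) = w := by
  rw [mulVec_mulVec, Matrix.mul_nonsing_inv A (isUnit_iff_ne_zero.mpr hA.det_pos.ne'),
    one_mulVec]

lemma dotD_eq (hGh : G.IsHermitian) :
    u ⬝ᵥ (G * A⁻¹ * G) *ᵥ u = (G *ᵥ u) ⬝ᵥ (A⁻¹ *ᵥ (G *ᵥ u)) := by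
  rw [Matrix.mul_assoc, dot_mul_mulVec, transpose_eq_of_herm hGh, ← mulVec_mulVec]

include hu in
lemma trace_inv_DFP : (A⁻¹ * DFPupd A G u).trace
    = (A⁻¹ * G).trace - (u ⬝ᵥ G *ᵥ u) / (u ⬝ᵥ A *ᵥ u) + 1 := by
  have hr : 0 < u ⬝ᵥ A *ᵥ u := by simpa using hA.dotProduct_mulVec_pos hu
  have h1 : (G *ᵥ u) ⬝ᵥ (A⁻¹ *ᵥ (A *ᵥ u)) = u ⬝ᵥ G *ᵥ u := by
    rw [Ainv_mulVec_A_mulVec hA, dotProduct_comm]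
  have h2 : (A *ᵥ u) ⬝ᵥ (A⁻¹ *ᵥ (G *ᵥ u)) = u ⬝ᵥ G *ᵥ u := by
    rw [dotProduct_comm (A *ᵥ u), dot_mulVec_symm hA.isHermitian, A_mulVec_Ainv_mulVec hA]
  have h3 : (A *ᵥ u) ⬝ᵥ (A⁻¹ *ᵥ (A *ᵥ u)) = u ⬝ᵥ A *ᵥ u := by
    rw [Ainv_mulVec_A_mulVec hA, dotProduct_comm]
  unfold DFPupd
  rw [Matrix.mul_add, Matrix.mul_sub, Matrix.mul_smul, Matrix.mul_smul, Matrix.mul_add,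
    trace_add, trace_sub, trace_smul, trace_smul, trace_add, trace_mul_vecMulVec,
    trace_mul_vecMulVec, trace_mul_vecMulVec, h1, h2, h3]
  simp only [smul_eq_mul]
  field_simp
  ring

include hGA hu in
lemma trace_inv_BFGS : (A⁻¹ * BFGSupd A G u).trace
    = (A⁻¹ * G).trace - (u ⬝ᵥ (G * A⁻¹ * G) *ᵥ u) / (u ⬝ᵥ G *ᵥ u) + 1 := by
  have hr : 0 < u ⬝ᵥ A *ᵥ u := by simpa using hA.dotProduct_mulVec_pos hu
  have hq : 0 < u ⬝ᵥ G *ᵥ u := by simpa using (G_posDef hA hGA).dotProduct_mulVec_pos hu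
  have h1 : (G *ᵥ u) ⬝ᵥ (A⁻¹ *ᵥ (G *ᵥ u)) = u ⬝ᵥ (G * A⁻¹ * G) *ᵥ u :=
    (dotD_eq hA (G_herm' hA hGA)).symm
  have h3 : (A *ᵥ u) ⬝ᵥ (A⁻¹ *ᵥ (A *ᵥ u)) = u ⬝ᵥ A *ᵥ u := by
    rw [Ainv_mulVec_A_mulVec hA, dotProduct_comm]
  unfold BFGSupd
  rw [Matrix.mul_add, Matrix.mul_sub, Matrix.mul_smul, Matrix.mul_smul,
    trace_add, trace_sub, trace_smul, trace_smul, trace_mul_vecMulVec,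
    trace_mul_vecMulVec, h1, h3]
  simp only [smul_eq_mul]
  field_simp

include hGA hAG hη in
include hu in
lemma key_facts :
    0 < u ⬝ᵥ A *ᵥ u ∧ 0 < u ⬝ᵥ G *ᵥ u ∧ 0 < u ⬝ᵥ (G * A⁻¹ * G) *ᵥ u ∧
    u ⬝ᵥ A *ᵥ u ≤ u ⬝ᵥ G *ᵥ u ∧
    (u ⬝ᵥ G *ᵥ u) ^ 2 ≤ (u ⬝ᵥ A *ᵥ u) * (u ⬝ᵥ (G * A⁻¹ * G) *ᵥ u) ∧
    0 ≤ u ⬝ᵥ ((G - A) * A⁻¹ * (G - A)) *ᵥ u ∧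
    u ⬝ᵥ ((G - A) * A⁻¹ * (G - A)) *ᵥ u
      = u ⬝ᵥ (G * A⁻¹ * G) *ᵥ u - 2 * (u ⬝ᵥ G *ᵥ u) + u ⬝ᵥ A *ᵥ u ∧
    u ⬝ᵥ ((G - A) * A⁻¹ * (G - A)) *ᵥ u ≤ (η - 1) * (u ⬝ᵥ G *ᵥ u - u ⬝ᵥ A *ᵥ u) := by
  have hAd : IsUnit A.det := isUnit_iff_ne_zero.mpr hA.det_pos.ne'
  have hr : 0 < u ⬝ᵥ A *ᵥ u := by simpa using hA.dotProduct_mulVec_pos hu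
  have hq : 0 < u ⬝ᵥ G *ᵥ u := by simpa using (G_posDef hA hGA).dotProduct_mulVec_pos hu
  have hqr : u ⬝ᵥ A *ᵥ u ≤ u ⬝ᵥ G *ᵥ u := by
    have := psd_quad hGA u
    simp only [sub_mulVec, dotProduct_sub] at this
    linarith
  -- Cauchy-Schwarz : q^2 ≤ r * D
  have hCS : (u ⬝ᵥ G *ᵥ u) ^ 2 ≤ (u ⬝ᵥ A *ᵥ u) * (u ⬝ᵥ (G * A⁻¹ * G) *ᵥ u) := by
    have h := psd_cauchy_schwarz hA.posSemidef u (A⁻¹ *ᵥ (G *ᵥ u))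
    rw [A_mulVec_Ainv_mulVec hA] at h
    have hw : (A⁻¹ *ᵥ (G *ᵥ u)) ⬝ᵥ (G *ᵥ u) = u ⬝ᵥ (G * A⁻¹ * G) *ᵥ u := by
      rw [dotD_eq hA (G_herm' hA hGA)]
      exact dotProduct_comm _ _
    rwa [hw] at h
  have hD : 0 < u ⬝ᵥ (G * A⁻¹ * G) *ᵥ u := by nlinarith
  have hN : 0 ≤ u ⬝ᵥ ((G - A) * A⁻¹ * (G - A)) *ᵥ u :=
    quad_MAinvM_nonneg hA (hGA.isHermitian) u
  have hid : (G - A) * A⁻¹ * (G - A) = G * A⁻¹ * G - G - G + A := by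
    rw [Matrix.sub_mul, Matrix.mul_nonsing_inv A hAd, Matrix.sub_mul, Matrix.mul_sub,
      Matrix.one_mul, Matrix.mul_assoc G A⁻¹ A, Matrix.nonsing_inv_mul A hAd, Matrix.mul_one]
    abel
  have hND : u ⬝ᵥ ((G - A) * A⁻¹ * (G - A)) *ᵥ u
      = u ⬝ᵥ (G * A⁻¹ * G) *ᵥ u - 2 * (u ⬝ᵥ G *ᵥ u) + u ⬝ᵥ A *ᵥ u := by
    rw [hid]
    simp only [sub_mulVec, add_mulVec, dotProduct_sub, dotProduct_add]
    ring
  have hrearr : (η - 1) • A - (G - A) = η • A - G := by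
    ext i j
    simp only [Matrix.sub_apply, Matrix.smul_apply, smul_eq_mul]
    ring
  have hNle : u ⬝ᵥ ((G - A) * A⁻¹ * (G - A)) *ᵥ u
      ≤ (η - 1) * (u ⬝ᵥ G *ᵥ u - u ⬝ᵥ A *ᵥ u) := by
    have := quad_MAinvM_le hA hGA (by linarith : (0:ℝ) ≤ η - 1) (by rw [hrearr]; exact hAG) u
    have hexp : u ⬝ᵥ (G - A) *ᵥ u = u ⬝ᵥ G *ᵥ u - u ⬝ᵥ A *ᵥ u := by
      simp only [sub_mulVec, dotProduct_sub]
    rw [hexp] at this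
    linarith
  exact ⟨hr, hq, hD, hqr, hCS, hN, hND, hNle⟩

include hGA hAG hη hu in
lemma broyd_trace_le {φ : ℝ} (hφ0 : 0 ≤ φ) (hφ1 : φ ≤ 1) :
    (A⁻¹ * (Broyd φ A G u)).trace ≤ (A⁻¹ * G).trace
      - (φ * η⁻¹ + 1 - φ) *
        ((u ⬝ᵥ ((G - A) * A⁻¹ * (G - A)) *ᵥ u) / (u ⬝ᵥ (G * A⁻¹ * G) *ᵥ u)) := by
  obtain ⟨hr, hq, hD, hqr, hCS, hN, hND, hNle⟩ := key_facts hA hGA hAG hη hu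
  set r := u ⬝ᵥ A *ᵥ u with hrd
  set q := u ⬝ᵥ G *ᵥ u with hqd
  set D := u ⬝ᵥ (G * A⁻¹ * G) *ᵥ u with hDd
  set N := u ⬝ᵥ ((G - A) * A⁻¹ * (G - A)) *ᵥ u with hNd
  have hη0 : 0 < η := lt_of_lt_of_le one_pos hη
  have hDr : r ≤ D := by nlinarith
  unfold Broyd
  rw [if_neg hu, Matrix.mul_add, Matrix.mul_smul, Matrix.mul_smul, trace_add, trace_smul,
    trace_smul, trace_inv_DFP hA hu, trace_inv_BFGS hA hGA hu]
  simp only [smul_eq_mul]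
  have pieceB : N / D ≤ D / q - 1 := by
    have h1 : N / D ≤ (D - q) / q := by
      rw [div_le_div_iff₀ hD hq]; nlinarith [sq_nonneg (D - q)]
    have h2 : (D - q) / q = D / q - 1 := by field_simp
    linarith
  have pieceD : η⁻¹ * (N / D) ≤ q / r - 1 := by
    have h1 : N / D ≤ N / r := by rw [div_le_div_iff₀ hD hr]; nlinarith
    have h2 : N / r ≤ ((η - 1) * (q - r)) / r := by
      rw [div_le_div_iff₀ hr hr]; nlinarith [hNle, hr.le]
    have hinv : 0 ≤ η⁻¹ := inv_nonneg.mpr hη0.le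
    have h3 : η⁻¹ * (((η - 1) * (q - r)) / r) = (1 - η⁻¹) * ((q - r) / r) := by
      field_simp
    have h4 : (1 - η⁻¹) * ((q - r) / r) ≤ (q - r) / r := by
      have hx : 0 ≤ (q - r) / r := div_nonneg (by linarith) hr.le
      nlinarith
    have h5 : (q - r) / r = q / r - 1 := by field_simp
    calc η⁻¹ * (N / D) ≤ η⁻¹ * (N / r) := mul_le_mul_of_nonneg_left h1 hinv
      _ ≤ η⁻¹ * (((η - 1) * (q - r)) / r) := mul_le_mul_of_nonneg_left h2 hinv
      _ = (1 - η⁻¹) * ((q - r) / r) := h3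
      _ ≤ (q - r) / r := h4
      _ = q / r - 1 := h5
  have e1 := mul_le_mul_of_nonneg_left pieceD hφ0
  have e2 := mul_le_mul_of_nonneg_left pieceB (by linarith : (0:ℝ) ≤ 1 - φ)
  nlinarith [e1, e2]

include hGA hAG hη in
lemma broyd_sandwich {φ : ℝ} (hφ0 : 0 ≤ φ) (hφ1 : φ ≤ 1) :
    (Broyd φ A G u - A).PosSemidef ∧ (η • A - Broyd φ A G u).PosSemidef := by
  by_cases hu0 : u = 0
  · unfold Broyd; rw [if_pos hu0]; exact ⟨hGA, hAG⟩
  · obtain ⟨hD1, hD2⟩ := DFP_sandwich hA hGA hAG hη hu0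
    obtain ⟨hB1, hB2⟩ := BFGS_sandwich hA hGA hAG hη hu0
    unfold Broyd; rw [if_neg hu0]
    constructor
    · have hid : φ • DFPupd A G u + (1 - φ) • BFGSupd A G u - A
          = φ • (DFPupd A G u - A) + (1 - φ) • (BFGSupd A G u - A) := by
        ext i j
        simp only [Matrix.sub_apply, Matrix.add_apply, Matrix.smul_apply, smul_eq_mul]
        ring
      rw [hid]; exact (psd_smul' hD1 hφ0).add (psd_smul' hB1 (by linarith))
    · have hid : η • A - (φ • DFPupd A G u + (1 - φ) • BFGSupd A G u)
          = φ • (η • A - DFPupd A G u) + (1 - φ) • (η • A - BFGSupd A G u) := by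
        ext i j
        simp only [Matrix.sub_apply, Matrix.add_apply, Matrix.smul_apply, smul_eq_mul]
        ring
      rw [hid]; exact (psd_smul' hD2 hφ0).add (psd_smul' hB2 (by linarith))

end sig


theorem quad_superlinear_convergence {n : ℕ} (A B : Matrix (Fin n) (Fin n) ℝ)
    (hA : A.PosDef) (hB : B.PosDef) (μ L : ℝ) (hμ : 0 < μ) (hμL : μ ≤ L)
    (hml : (A - μ • B).PosSemidef) (hmu : (L • B - A).PosSemidef)
    (b : Fin n → ℝ) (x : ℕ → Fin n → ℝ) (G : ℕ → Matrix (Fin n) (Fin n) ℝ)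
    (φ : ℕ → ℝ) (hφ : ∀ k, φ k ∈ Set.Icc (0 : ℝ) 1)
    (hG0 : G 0 = L • B)
    (hstep : ∀ k, x (k + 1) = x k - (G k)⁻¹.mulVec (A.mulVec (x k) - b))
    (hupd : ∀ k, G (k + 1) = Broyd (φ k) A (G k) (x (k + 1) - x k)) :
    ∀ k : ℕ, 1 ≤ k →
      (lamQ A b (x k) ≤
        (1 / Real.sqrt (∏ i ∈ Finset.range k, (φ i * (μ / L) + 1 - φ i))) *
          ((n * L / (μ * k)) ^ ((k : ℝ) / 2)) * lamQ A b (x 0)) ∧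
      ((∀ i, φ i = 0) →
        lamQ A b (x k) ≤ ((n * L / (μ * k)) ^ ((k : ℝ) / 2)) * lamQ A b (x 0)) := by
  have hLpos : 0 < L := lt_of_lt_of_le hμ hμL
  set η := L / μ with hηd
  have hη : 1 ≤ η := (one_le_div hμ).mpr hμL
  have hη0 : 0 < η := lt_of_lt_of_le one_pos hη
  -- sandwich invariant
  have hsand : ∀ k, ((G k - A).PosSemidef ∧ (η • A - G k).PosSemidef) := by
    intro k
    induction k with
    | zero =>
      rw [hG0]
      refine ⟨hmu, ?_⟩
      have hid : η • A - L • B = (L / μ) • (A - μ • B) := by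
        ext i j
        simp only [Matrix.sub_apply, Matrix.smul_apply, smul_eq_mul, hηd]
        field_simp
      rw [hid]
      exact psd_smul' hml (by positivity)
    | succ k ih =>
      rw [hupd k]
      exact broyd_sandwich hA ih.1 ih.2 hη (hφ k).1 (hφ k).2
  have hGdet : ∀ k, IsUnit (G k).det := fun k =>
    isUnit_iff_ne_zero.mpr (G_posDef hA (hsand k).1).det_pos.ne'
  have hu_eq : ∀ k, x (k+1) - x k = -((G k)⁻¹ *ᵥ (A *ᵥ x k - b)) := by
    intro k; rw [hstep k]; abel
  have hGu : ∀ k, (G k) *ᵥ (x (k+1) - x k) = -(A *ᵥ x k - b) := by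
    intro k
    rw [hu_eq k, mulVec_neg, mulVec_mulVec, Matrix.mul_nonsing_inv _ (hGdet k), one_mulVec]
  have hgrec : ∀ k, A *ᵥ x (k+1) - b = (A - G k) *ᵥ (x (k+1) - x k) := by
    intro k
    have hx : x (k+1) = x k + (x (k+1) - x k) := by abel
    rw [sub_mulVec, hGu k]
    conv_lhs => rw [hx]
    rw [mulVec_add]
    abel
  -- λ recurrence
  have lamrec : ∀ k, lamQ A b (x (k+1))
      = theta A (G k) (x (k+1) - x k) * lamQ A b (x k) := by
    intro k
    by_cases hu0 : x (k+1) - x k = 0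
    · have hg0 : A *ᵥ x k - b = 0 := by
        have h := hGu k
        rw [hu0, mulVec_zero] at h
        exact neg_eq_zero.mp h.symm
      have hx : x (k+1) = x k := by
        have := sub_eq_zero.mp hu0; exact this
      rw [hu0, hx]
      unfold theta
      rw [if_pos rfl, zero_mul]
      unfold lamQ
      rw [hg0]
      simp
    · obtain ⟨hr, hq, hD, hqr, hCS, hN, hNDq, hNle⟩ :=
        key_facts hA (hsand k).1 (hsand k).2 hη hu0
      have hGh := G_herm' hA (hsand k).1
      have hDg : (x (k+1) - x k) ⬝ᵥ (G k * A⁻¹ * G k) *ᵥ (x (k+1) - x k)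
          = (A *ᵥ x k - b) ⬝ᵥ A⁻¹ *ᵥ (A *ᵥ x k - b) := by
        rw [dotD_eq hA hGh, hGu k, mulVec_neg, dotProduct_neg, neg_dotProduct, neg_neg]
      have hNg : (x (k+1) - x k) ⬝ᵥ ((G k - A) * A⁻¹ * (G k - A)) *ᵥ (x (k+1) - x k)
          = (A *ᵥ x (k+1) - b) ⬝ᵥ A⁻¹ *ᵥ (A *ᵥ x (k+1) - b) := by
        rw [Matrix.mul_assoc, dot_mul_mulVec, transpose_eq_of_herm (hsand k).1.isHermitian,
          ← mulVec_mulVec, hgrec k, ← neg_sub A (G k), neg_mulVec, mulVec_neg,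
          dotProduct_neg, neg_dotProduct, neg_neg]
      rw [hNg] at hN
      rw [hDg] at hD
      unfold lamQ theta
      rw [if_neg hu0, hDg, hNg, ← Real.sqrt_mul (div_nonneg hN hD.le),
        div_mul_cancel₀ _ hD.ne']
  -- σ decrease
  have hθnn : ∀ k, 0 ≤ theta A (G k) (x (k+1) - x k) := by
    intro k
    unfold theta
    split
    · exact le_refl 0
    · exact Real.sqrt_nonneg _
  have hsig : ∀ k, (A⁻¹ * G (k+1)).trace ≤ (A⁻¹ * G k).trace
      - (φ k * η⁻¹ + 1 - φ k) * (theta A (G k) (x (k+1) - x k)) ^ 2 := by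
    intro k
    by_cases hu0 : x (k+1) - x k = 0
    · rw [hupd k]
      unfold Broyd theta
      rw [if_pos hu0, if_pos hu0]
      simp
    · obtain ⟨hr, hq, hD, hqr, hCS, hN, hNDq, hNle⟩ :=
        key_facts hA (hsand k).1 (hsand k).2 hη hu0
      have h := broyd_trace_le hA (hsand k).1 (hsand k).2 hη hu0 (hφ k).1 (hφ k).2
      rw [← hupd k] at h
      have hth : (theta A (G k) (x (k+1) - x k)) ^ 2
          = (x (k+1) - x k) ⬝ᵥ ((G k - A) * A⁻¹ * (G k - A)) *ᵥ (x (k+1) - x k)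
            / ((x (k+1) - x k) ⬝ᵥ (G k * A⁻¹ * G k) *ᵥ (x (k+1) - x k)) := by
        unfold theta
        rw [if_neg hu0, Real.sq_sqrt (div_nonneg hN hD.le)]
      rw [hth]
      exact h
  -- telescoping
  have hsum : ∀ k, (A⁻¹ * G k).trace + ∑ i ∈ Finset.range k,
      (φ i * η⁻¹ + 1 - φ i) * (theta A (G i) (x (i+1) - x i)) ^ 2 ≤ (A⁻¹ * G 0).trace := by
    intro k
    induction k with
    | zero => simp
    | succ k ih =>
      rw [Finset.sum_range_succ]
      have := hsig k
      linarith
  have htrone : (A⁻¹ * A).trace = (n : ℝ) := by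
    rw [Matrix.nonsing_inv_mul A (isUnit_iff_ne_zero.mpr hA.det_pos.ne'), trace_one]
    simp
  have hT0 : (A⁻¹ * G 0).trace ≤ n * η := by
    have h := trace_inv_mul_nonneg hA (hsand 0).2
    rw [Matrix.mul_sub, Matrix.mul_smul, trace_sub, trace_smul, smul_eq_mul, htrone] at h
    linarith
  have hTk : ∀ k, (n:ℝ) ≤ (A⁻¹ * G k).trace := by
    intro k
    have h := trace_inv_mul_nonneg hA (hsand k).1
    rw [Matrix.mul_sub, trace_sub, htrone] at h
    linarith
  have hsumle : ∀ k, ∑ i ∈ Finset.range k,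
      (φ i * η⁻¹ + 1 - φ i) * (theta A (G i) (x (i+1) - x i)) ^ 2 ≤ n * η := by
    intro k
    have := hsum k
    have := hTk k
    have hn0 : (0:ℝ) ≤ n := Nat.cast_nonneg n
    linarith
  have hcpos : ∀ i, 0 < φ i * η⁻¹ + 1 - φ i := by
    intro i
    have h1 : η⁻¹ ≤ 1 := inv_le_one_of_one_le₀ hη
    have h2 : 0 < η⁻¹ := inv_pos.mpr hη0
    nlinarith [(hφ i).1, (hφ i).2]
  -- λ product formula
  have hlamprod : ∀ k, lamQ A b (x k)
      = (∏ i ∈ Finset.range k, theta A (G i) (x (i+1) - x i)) * lamQ A b (x 0) := by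
    intro k
    induction k with
    | zero => simp
    | succ k ih =>
      rw [Finset.prod_range_succ, lamrec k, ih]
      ring
  have hlam0 : 0 ≤ lamQ A b (x 0) := Real.sqrt_nonneg _
  have hinveta : η⁻¹ = μ / L := by rw [hηd, inv_div]
  -- main bound
  have main : ∀ k : ℕ, 1 ≤ k → lamQ A b (x k) ≤
      (1 / Real.sqrt (∏ i ∈ Finset.range k, (φ i * (μ / L) + 1 - φ i))) *
        ((n * L / (μ * k)) ^ ((k : ℝ) / 2)) * lamQ A b (x 0) := by
    intro k hk
    have hkR : (0:ℝ) < k := by exact_mod_cast hk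
    have hceq : ∀ i, φ i * (μ / L) + 1 - φ i = φ i * η⁻¹ + 1 - φ i := by
      intro i; rw [hinveta]
    set z : ℕ → ℝ := fun i => (φ i * η⁻¹ + 1 - φ i) * (theta A (G i) (x (i+1) - x i)) ^ 2
      with hzd
    have hznn : ∀ i, 0 ≤ z i := fun i => mul_nonneg (hcpos i).le (sq_nonneg _)
    have hAM := Real.geom_mean_le_arith_mean_weighted (Finset.range k)
      (fun _ => (k:ℝ)⁻¹) z (fun i _ => by positivity)
      (by rw [Finset.sum_const, Finset.card_range, nsmul_eq_mul, mul_inv_cancel₀ hkR.ne'])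
      (fun i _ => hznn i)
    have hprodpow : ∏ i ∈ Finset.range k, (z i) ^ ((k:ℝ)⁻¹)
        = (∏ i ∈ Finset.range k, z i) ^ ((k:ℝ)⁻¹) := by
      rw [← Real.finset_prod_rpow (Finset.range k) z (fun i _ => hznn i)]
    have hsumz : ∑ i ∈ Finset.range k, (k:ℝ)⁻¹ * z i ≤ n * η / k := by
      rw [← Finset.mul_sum]
      rw [div_eq_inv_mul]
      exact mul_le_mul_of_nonneg_left (hsumle k) (inv_nonneg.mpr hkR.le)
    set Z := ∏ i ∈ Finset.range k, z i with hZd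
    have hZnn : 0 ≤ Z := Finset.prod_nonneg fun i _ => hznn i
    have hSnn : (0:ℝ) ≤ n * η / k := by positivity
    have hZpow : Z ^ ((k:ℝ)⁻¹) ≤ n * η / k := by
      rw [← hprodpow]; exact le_trans hAM hsumz
    have hZle : Z ≤ (n * η / k) ^ (k:ℝ) := by
      have h1 : (Z ^ ((k:ℝ)⁻¹)) ^ (k:ℝ) ≤ (n * η / k) ^ (k:ℝ) :=
        Real.rpow_le_rpow (Real.rpow_nonneg hZnn _) hZpow (Nat.cast_nonneg k)
      rwa [← Real.rpow_mul hZnn, inv_mul_cancel₀ hkR.ne', Real.rpow_one] at h1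
    -- split Z into P * Θ²
    set P := ∏ i ∈ Finset.range k, (φ i * η⁻¹ + 1 - φ i) with hPd
    set Θ := ∏ i ∈ Finset.range k, theta A (G i) (x (i+1) - x i) with hΘd
    have hPpos : 0 < P := Finset.prod_pos fun i _ => hcpos i
    have hΘnn : 0 ≤ Θ := Finset.prod_nonneg fun i _ => hθnn i
    have hZsplit : Z = P * Θ ^ 2 := by
      rw [hZd, hPd, hΘd, ← Finset.prod_pow, ← Finset.prod_mul_distrib]
    have hΘsq : Θ ^ 2 ≤ (n * η / k) ^ (k:ℝ) / P := by
      rw [le_div_iff₀ hPpos]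
      calc Θ ^ 2 * P = Z := by rw [hZsplit]; ring
        _ ≤ (n * η / k) ^ (k:ℝ) := hZle
    have hΘle : Θ ≤ (n * η / k) ^ ((k:ℝ)/2) / Real.sqrt P := by
      have h1 : Θ = Real.sqrt (Θ ^ 2) := (Real.sqrt_sq hΘnn).symm
      rw [h1]
      have h2 : Real.sqrt (Θ ^ 2) ≤ Real.sqrt ((n * η / k) ^ (k:ℝ) / P) :=
        Real.sqrt_le_sqrt hΘsq
      refine le_trans h2 (le_of_eq ?_)
      rw [Real.sqrt_div (Real.rpow_nonneg hSnn _), Real.sqrt_eq_rpow, ← Real.rpow_mul hSnn,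
        mul_one_div]
    have hbase : (n:ℝ) * η / k = n * L / (μ * k) := by
      rw [hηd]; field_simp
    have hPP : ∏ i ∈ Finset.range k, (φ i * (μ / L) + 1 - φ i) = P := by
      rw [hPd]; exact Finset.prod_congr rfl fun i _ => by rw [hceq i]
    calc lamQ A b (x k) = Θ * lamQ A b (x 0) := hlamprod k
      _ ≤ ((n * η / k) ^ ((k:ℝ)/2) / Real.sqrt P) * lamQ A b (x 0) :=
          mul_le_mul_of_nonneg_right hΘle hlam0
      _ = (1 / Real.sqrt (∏ i ∈ Finset.range k, (φ i * (μ / L) + 1 - φ i))) *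
          ((n * L / (μ * k)) ^ ((k : ℝ) / 2)) * lamQ A b (x 0) := by
          rw [hbase, hPP]
          ring
  intro k hk
  refine ⟨main k hk, fun hz => ?_⟩
  have hP1 : ∏ i ∈ Finset.range k, (φ i * (μ / L) + 1 - φ i) = 1 := by
    apply Finset.prod_eq_one
    intro i _
    rw [hz i]
    ring
  have h := main k hk
  rwa [hP1, Real.sqrt_one, div_one, one_mul] at h
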